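/- Let f : {−1,1}^n → {−1,1} be computable by a decision tree T of size s (with s ≥ 2), and let τ > 0. Then there exists a pruning T* of T such that (i) Pr_{x uniform on {−1,1}^n}[f(x) ≠ T*(x)] ≤ τ·log₂ s, and (ii) T* is everywhere τ-influential with respect to f, i.e., for every internal node v of T*, writing i(v) for the variable queried at v, Inf_{i(v)}(f_v) ≥ τ, where f_v is the restriction of f obtained by fixing variables according to the root-to-v path in T*. -/

import Mathlib

/-!
Decision trees over {-1,1}^n, where a point of the cube is encoded as `x : Fin n → Bool`
(`true` encodes 1, `false` encodes -1).
-/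

/-- Decision trees with values in `Y` over `n` boolean variables. -/
inductive DTree (Y : Type) (n : ℕ) : Type
  | leaf : Y → DTree Y n
  | node : Fin n → DTree Y n → DTree Y n → DTree Y n

namespace DTree

variable {Y : Type} {n : ℕ}

/-- The function computed by a decision tree: at a node labeled `i`, follow the right
subtree if `x_i = 1` (`x i = true`) and the left subtree if `x_i = -1` (`x i = false`). -/
def eval : DTree Y n → (Fin n → Bool) → Y
  | .leaf y, _ => y
  | .node i l r, x => if x i then r.eval x else l.eval x

/-- The size of a decision tree is its number of leaves. -/
def size : DTree Y n → ℕ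
  | .leaf _ => 1
  | .node _ l r => l.size + r.size

/-- A pruning of a decision tree is obtained by repeatedly replacing an internal node
by one of its two subtrees. `IsPruning T' T` means `T'` is a pruning of `T`. -/
inductive IsPruning : DTree Y n → DTree Y n → Prop
  | leaf (y : Y) : IsPruning (.leaf y) (.leaf y)
  | node (i : Fin n) {l r l' r' : DTree Y n} :
      IsPruning l' l → IsPruning r' r → IsPruning (.node i l' r') (.node i l r)
  | left {i : Fin n} {l r t : DTree Y n} : IsPruning t l → IsPruning t (.node i l r)
  | right {i : Fin n} {l r t : DTree Y n} : IsPruning t r → IsPruning t (.node i l r)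

end DTree

/-- `Pr_{x uniform}[f(x) ≠ g(x)]` for boolean-valued functions on the cube. -/
noncomputable def probNe {n : ℕ} (f g : (Fin n → Bool) → Bool) : ℝ :=
  (∑ x : Fin n → Bool, if f x = g x then (0 : ℝ) else 1) / 2 ^ n

/-- The influence of variable `i` on `f`: `Pr[f(x) ≠ f(x^{~i})]`, where `x` is uniform and
`x^{~i}` is `x` with its `i`-th coordinate rerandomized (so the rerandomized bit is `true`
or `false` with probability 1/2 each). -/
noncomputable def infl {n : ℕ} (f : (Fin n → Bool) → Bool) (i : Fin n) : ℝ :=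
  (∑ x : Fin n → Bool,
      ((if f x = f (Function.update x i true) then (0 : ℝ) else 1) +
        (if f x = f (Function.update x i false) then (0 : ℝ) else 1)) / 2) / 2 ^ n

/-- `T` is everywhere `τ`-influential with respect to `f`: for every internal node `v` of `T`,
the variable `i(v)` queried at `v` has influence at least `τ` on the restriction `f_v` of `f`
by the root-to-`v` path in `T`. -/
def EwInfl {n : ℕ} (τ : ℝ) : ((Fin n → Bool) → Bool) → DTree Bool n → Prop
  | _, .leaf _ => True
  | f, .node i l r =>
      τ ≤ infl f i ∧
      EwInfl τ (fun x => f (Function.update x i false)) l ∧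
      EwInfl τ (fun x => f (Function.update x i true)) r

-- ===== auxiliary development =====

namespace DTreePrune

open DTree

variable {Y : Type} {n : ℕ}

theorem size_pos (T : DTree Y n) : 1 ≤ T.size := by
  induction T with
  | leaf y => simp [DTree.size]
  | node i l r ihl ihr => simp only [DTree.size]; omega

/-- Restrict a tree by fixing variable `i` to `b`. -/
def restrict (i : Fin n) (b : Bool) : DTree Y n → DTree Y n
  | .leaf y => .leaf y
  | .node j l r =>
      if j = i then (if b then restrict i b r else restrict i b l)
      else .node j (restrict i b l) (restrict i b r)

theorem eval_restrict (i : Fin n) (b : Bool) (T : DTree Y n) (x : Fin n → Bool) :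
    (restrict i b T).eval x = T.eval (Function.update x i b) := by
  induction T with
  | leaf y => rfl
  | node j l r ihl ihr =>
    by_cases h : j = i
    · subst h
      cases b <;> simp [restrict, DTree.eval, ihl, ihr, Function.update_self]
    · simp [restrict, h, DTree.eval, ihl, ihr, Function.update_of_ne h]

theorem size_restrict_le (i : Fin n) (b : Bool) (T : DTree Y n) :
    (restrict i b T).size ≤ T.size := by
  induction T with
  | leaf y => simp [restrict]
  | node j l r ihl ihr =>
    by_cases h : j = i
    · subst h
      cases b <;> simp only [restrict, if_true, if_false, if_pos rfl, DTree.size, Bool.false_eq_true] <;>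
        [skip; skip] <;> omega
    · simp only [restrict, if_neg h, DTree.size]; omega

theorem isPruning_restrict (i : Fin n) (b : Bool) (T : DTree Y n) :
    IsPruning (restrict i b T) T := by
  induction T with
  | leaf y => exact .leaf y
  | node j l r ihl ihr =>
    by_cases h : j = i
    · subst h
      cases b
      · simpa [restrict] using IsPruning.left ihl
      · simpa [restrict] using IsPruning.right ihr
    · simpa [restrict, h] using IsPruning.node j ihl ihr

theorem isPruning_trans {c b a : DTree Y n} (h1 : IsPruning b a) (h2 : IsPruning c b) :
    IsPruning c a := by
  induction h1 generalizing c with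
  | leaf y => exact h2
  | node i hl hr ihl ihr =>
    cases h2 with
    | node _ hl2 hr2 => exact .node _ (ihl hl2) (ihr hr2)
    | left h => exact .left (ihl h)
    | right h => exact .right (ihr h)
  | left h ih => exact .left (ih h2)
  | right h ih => exact .right (ih h2)

/-- `T` never queries variable `i`. -/
def Avoids (i : Fin n) : DTree Y n → Prop
  | .leaf _ => True
  | .node j l r => j ≠ i ∧ Avoids i l ∧ Avoids i r

theorem avoids_restrict (i : Fin n) (b : Bool) (T : DTree Y n) :
    Avoids i (restrict i b T) := by
  induction T with
  | leaf y => trivial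
  | node j l r ihl ihr =>
    by_cases h : j = i
    · subst h; cases b <;> simpa [restrict]
    · simp only [restrict, if_neg h]
      exact ⟨h, ihl, ihr⟩

theorem avoids_of_isPruning {i : Fin n} {T' T : DTree Y n} (h : IsPruning T' T)
    (hT : Avoids i T) : Avoids i T' := by
  induction h with
  | leaf y => trivial
  | node j hl hr ihl ihr => exact ⟨hT.1, ihl hT.2.1, ihr hT.2.2⟩
  | left h ih => exact ih hT.2.1
  | right h ih => exact ih hT.2.2

theorem eval_update_of_avoids {i : Fin n} (x : Fin n → Bool) (b : Bool) :
    ∀ {T : DTree Y n}, Avoids i T → T.eval (Function.update x i b) = T.eval x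
  | .leaf y, _ => rfl
  | .node j l r, ⟨hj, hl, hr⟩ => by
    simp only [DTree.eval, Function.update_of_ne hj,
      eval_update_of_avoids x b hl, eval_update_of_avoids x b hr]

-- sums over the cube

lemma update_piSplitAt {n : ℕ} (i : Fin n) (c b : Bool)
    (y : ({ j // j ≠ i } → Bool)) :
    Function.update ((Equiv.piSplitAt i (fun _ => Bool)).symm (c, y)) i b
      = (Equiv.piSplitAt i (fun _ => Bool)).symm (b, y) := by
  funext j
  by_cases h : j = i
  · subst h; simp [Equiv.piSplitAt_symm_apply]
  · simp [Function.update_of_ne h, Equiv.piSplitAt_symm_apply, h]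

lemma sum_half {n : ℕ} (i : Fin n) (H : (Fin n → Bool) → ℝ) :
    ∑ x : Fin n → Bool, H x
      = (∑ x : Fin n → Bool,
          (H (Function.update x i false) + H (Function.update x i true))) / 2 := by
  rw [← Equiv.sum_comp (Equiv.piSplitAt i (fun _ : Fin n => Bool)).symm H,
      ← Equiv.sum_comp (Equiv.piSplitAt i (fun _ : Fin n => Bool)).symm
        (fun x => H (Function.update x i false) + H (Function.update x i true))]
  rw [Fintype.sum_prod_type, Fintype.sum_prod_type]
  simp only [Fintype.sum_bool, update_piSplitAt]
  rw [← Finset.sum_add_distrib]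
  ring_nf
  exact Finset.sum_congr rfl fun x _ => add_comm _ _

-- probNe basics

lemma probNe_nonneg {n : ℕ} (f g : (Fin n → Bool) → Bool) : 0 ≤ probNe f g := by
  unfold probNe
  apply div_nonneg _ (by positivity)
  apply Finset.sum_nonneg
  intro x _
  split <;> norm_num

lemma probNe_eq_zero {n : ℕ} {f g : (Fin n → Bool) → Bool} (h : ∀ x, g x = f x) :
    probNe f g = 0 := by
  unfold probNe
  rw [Finset.sum_eq_zero, zero_div]
  intro x _
  simp [h x]

lemma probNe_triangle {n : ℕ} (f g h : (Fin n → Bool) → Bool) :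
    probNe f h ≤ probNe f g + probNe g h := by
  unfold probNe
  rw [← add_div]
  apply div_le_div_of_nonneg_right ?_ (by positivity : (0:ℝ) ≤ 2 ^ n)
  rw [← Finset.sum_add_distrib]
  apply Finset.sum_le_sum
  intro x _
  by_cases h1 : f x = g x <;> by_cases h2 : g x = h x <;> by_cases h3 : f x = h x <;>
    simp_all

lemma probNe_congr {n : ℕ} {f g g' : (Fin n → Bool) → Bool} (h : ∀ x, g x = g' x) :
    probNe f g = probNe f g' := by
  unfold probNe
  congr 1
  exact Finset.sum_congr rfl fun x _ => by rw [h x]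


lemma probNe_update_eq_infl {n : ℕ} (g : (Fin n → Bool) → Bool) (i : Fin n) (b : Bool) :
    probNe g (fun x => g (Function.update x i b)) = infl g i := by
  unfold probNe infl
  congr 1
  rw [sum_half i (fun x => if g x = g (Function.update x i b) then (0:ℝ) else 1),
      sum_half i (fun x =>
        ((if g x = g (Function.update x i true) then (0:ℝ) else 1) +
          (if g x = g (Function.update x i false) then (0:ℝ) else 1)) / 2)]
  congr 1
  apply Finset.sum_congr rfl
  intro x _
  simp only [Function.update_idem]
  by_cases h : g (Function.update x i false) = g (Function.update x i true) <;>
    cases b <;> simp [h, eq_comm] <;> norm_num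

lemma probNe_node {n : ℕ} (g : (Fin n → Bool) → Bool) (i : Fin n)
    (l r : DTree Bool n) :
    probNe g (DTree.node i l r).eval =
      (probNe (fun x => g (Function.update x i false)) (restrict i false l).eval +
        probNe (fun x => g (Function.update x i true)) (restrict i true r).eval) / 2 := by
  unfold probNe
  rw [← add_div, div_right_comm, div_left_inj' (by positivity : ((2:ℝ) ^ n) ≠ 0)]
  rw [sum_half i (fun x => if g x = (DTree.node i l r).eval x then (0:ℝ) else 1),
    ← Finset.sum_add_distrib]
  congr 1
  apply Finset.sum_congr rfl
  intro x _
  have h1 : (DTree.node i l r).eval (Function.update x i false)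
      = (restrict i false l).eval x := by
    simp [DTree.eval, Function.update_self, eval_restrict]
  have h2 : (DTree.node i l r).eval (Function.update x i true)
      = (restrict i true r).eval x := by
    simp [DTree.eval, Function.update_self, eval_restrict]
  rw [h1, h2]

lemma probNe_node_avoids {n : ℕ} (g : (Fin n → Bool) → Bool) (i : Fin n)
    {l r : DTree Bool n} (hl : Avoids i l) (hr : Avoids i r) :
    probNe g (DTree.node i l r).eval =
      (probNe (fun x => g (Function.update x i false)) l.eval +
        probNe (fun x => g (Function.update x i true)) r.eval) / 2 := by
  rw [probNe_node]
  congr 2 <;> apply probNe_congr <;> intro x <;>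
    rw [eval_restrict, eval_update_of_avoids _ _ ‹_›]

lemma logb_two_four : Real.logb 2 4 = 2 := by
  rw [show (4:ℝ) = 2 ^ (2:ℕ) by norm_num, Real.logb_pow]
  simp [Real.logb_self_eq_one]

lemma logb_avg_add_one_le {a b : ℝ} (ha : 1 ≤ a) (hb : 1 ≤ b) :
    (Real.logb 2 a + Real.logb 2 b) / 2 + 1 ≤ Real.logb 2 (a + b) := by
  have ha0 : (0:ℝ) < a := by linarith
  have hb0 : (0:ℝ) < b := by linarith
  have h1 : Real.logb 2 (a * b * 4) = Real.logb 2 a + Real.logb 2 b + 2 := by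
    rw [Real.logb_mul (by positivity) (by norm_num),
        Real.logb_mul (by positivity) (by positivity), logb_two_four]
  have h2 : Real.logb 2 ((a + b) ^ (2:ℕ)) = 2 * Real.logb 2 (a + b) := by
    rw [Real.logb_pow]; norm_num
  have h3 : a * b * 4 ≤ (a + b) ^ (2:ℕ) := by nlinarith [sq_nonneg (a - b)]
  have h4 := Real.logb_le_logb_of_le (by norm_num : (1:ℝ) < 2) (by positivity) h3
  rw [h1, h2] at h4
  linarith

lemma logb_avg_le {a b : ℝ} (ha : 1 ≤ a) (hb : 1 ≤ b) :
    (Real.logb 2 a + Real.logb 2 b) / 2 ≤ Real.logb 2 (a + b) := by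
  linarith [logb_avg_add_one_le ha hb]

lemma logb_nat_nonneg (k : ℕ) (hk : 1 ≤ k) : 0 ≤ Real.logb 2 (k:ℝ) := by
  apply Real.logb_nonneg (by norm_num)
  exact_mod_cast hk

lemma logb_nat_mono {j k : ℕ} (hj : 1 ≤ j) (hjk : j ≤ k) :
    Real.logb 2 (j:ℝ) ≤ Real.logb 2 (k:ℝ) := by
  apply Real.logb_le_logb_of_le (by norm_num : (1:ℝ) < 2)
  · exact_mod_cast hj
  · exact_mod_cast hjk


theorem prune_rec {n : ℕ} (τ : ℝ) (hτ : 0 < τ) :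
    ∀ N (T : DTree Bool n), T.size ≤ N → ∀ g : (Fin n → Bool) → Bool,
      ∃ Ts : DTree Bool n, IsPruning Ts T ∧
        probNe g Ts.eval ≤ probNe g T.eval + τ * Real.logb 2 (T.size : ℝ) ∧
        EwInfl τ g Ts := by
  intro N
  induction N with
  | zero =>
    intro T hT
    have := size_pos T
    omega
  | succ N ih =>
    intro T hT g
    match T with
    | .leaf y =>
      refine ⟨.leaf y, .leaf y, ?_, trivial⟩
      simp [DTree.size, Real.logb_one]
    | .node i l r =>
      have hl1 : 1 ≤ l.size := size_pos l
      have hr1 : 1 ≤ r.size := size_pos r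
      have hsz : l.size + r.size ≤ N + 1 := by simpa [DTree.size] using hT
      have hlN : (restrict i false l).size ≤ N :=
        le_trans (size_restrict_le i false l) (by omega)
      have hrN : (restrict i true r).size ≤ N :=
        le_trans (size_restrict_le i true r) (by omega)
      have hrl1 : 1 ≤ (restrict i false l).size := size_pos _
      have hrr1 : 1 ≤ (restrict i true r).size := size_pos _
      have hsplit := probNe_node g i l r
      have hcast : ((DTree.node i l r).size : ℝ) = (l.size : ℝ) + (r.size : ℝ) := by
        simp [DTree.size]
      have hlogl : Real.logb 2 ((restrict i false l).size : ℝ)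
          ≤ Real.logb 2 (l.size : ℝ) := logb_nat_mono hrl1 (size_restrict_le i false l)
      have hlogr : Real.logb 2 ((restrict i true r).size : ℝ)
          ≤ Real.logb 2 (r.size : ℝ) := logb_nat_mono hrr1 (size_restrict_le i true r)
      have hlogsum : (Real.logb 2 (l.size : ℝ) + Real.logb 2 (r.size : ℝ)) / 2 + 1
          ≤ Real.logb 2 ((l.size : ℝ) + (r.size : ℝ)) := by
        apply logb_avg_add_one_le (by exact_mod_cast hl1) (by exact_mod_cast hr1)
      by_cases hinf : τ ≤ infl g i
      · obtain ⟨L, hLp, hLe, hLi⟩ := ih (restrict i false l) hlN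
          (fun x => g (Function.update x i false))
        obtain ⟨R, hRp, hRe, hRi⟩ := ih (restrict i true r) hrN
          (fun x => g (Function.update x i true))
        refine ⟨.node i L R,
          .node i (isPruning_trans (isPruning_restrict i false l) hLp)
            (isPruning_trans (isPruning_restrict i true r) hRp), ?_, hinf, hLi, hRi⟩
        have hAv := probNe_node_avoids g i
          (avoids_of_isPruning hLp (avoids_restrict i false l))
          (avoids_of_isPruning hRp (avoids_restrict i true r))
        rw [hAv, hsplit, hcast]
        have e1 : τ * Real.logb 2 ((restrict i false l).size : ℝ)
            ≤ τ * Real.logb 2 (l.size : ℝ) := mul_le_mul_of_nonneg_left hlogl hτ.le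
        have e2 : τ * Real.logb 2 ((restrict i true r).size : ℝ)
            ≤ τ * Real.logb 2 (r.size : ℝ) := mul_le_mul_of_nonneg_left hlogr hτ.le
        have e3 : τ * ((Real.logb 2 (l.size : ℝ) + Real.logb 2 (r.size : ℝ)) / 2)
            ≤ τ * (Real.logb 2 ((l.size : ℝ) + (r.size : ℝ)) - 1) := by
          apply mul_le_mul_of_nonneg_left _ hτ.le
          linarith
        linarith
      · push_neg at hinf
        by_cases hAB : probNe (fun x => g (Function.update x i false)) (restrict i false l).eval
              + τ * Real.logb 2 ((restrict i false l).size : ℝ)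
            ≤ probNe (fun x => g (Function.update x i true)) (restrict i true r).eval
              + τ * Real.logb 2 ((restrict i true r).size : ℝ)
        · obtain ⟨P, hPp, hPe, hPi⟩ := ih (restrict i false l) hlN g
          refine ⟨P, .left (isPruning_trans (isPruning_restrict i false l) hPp), ?_, hPi⟩
          have htri : probNe g (restrict i false l).eval
              ≤ probNe g (fun x => g (Function.update x i false))
                + probNe (fun x => g (Function.update x i false)) (restrict i false l).eval :=
            probNe_triangle _ _ _
          have hpe : probNe g (fun x => g (Function.update x i false)) = infl g i :=
            probNe_update_eq_infl g i false
          rw [hsplit, hcast]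
          have e1 : τ * Real.logb 2 ((restrict i false l).size : ℝ)
              ≤ τ * Real.logb 2 (l.size : ℝ) := mul_le_mul_of_nonneg_left hlogl hτ.le
          have e2 : τ * Real.logb 2 ((restrict i true r).size : ℝ)
              ≤ τ * Real.logb 2 (r.size : ℝ) := mul_le_mul_of_nonneg_left hlogr hτ.le
          have e3 : τ * ((Real.logb 2 (l.size : ℝ) + Real.logb 2 (r.size : ℝ)) / 2 + 1)
              ≤ τ * Real.logb 2 ((l.size : ℝ) + (r.size : ℝ)) :=
            mul_le_mul_of_nonneg_left hlogsum hτ.le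
          linarith
        · push_neg at hAB
          obtain ⟨P, hPp, hPe, hPi⟩ := ih (restrict i true r) hrN g
          refine ⟨P, .right (isPruning_trans (isPruning_restrict i true r) hPp), ?_, hPi⟩
          have htri : probNe g (restrict i true r).eval
              ≤ probNe g (fun x => g (Function.update x i true))
                + probNe (fun x => g (Function.update x i true)) (restrict i true r).eval :=
            probNe_triangle _ _ _
          have hpe : probNe g (fun x => g (Function.update x i true)) = infl g i :=
            probNe_update_eq_infl g i true
          rw [hsplit, hcast]
          have e1 : τ * Real.logb 2 ((restrict i false l).size : ℝ)
              ≤ τ * Real.logb 2 (l.size : ℝ) := mul_le_mul_of_nonneg_left hlogl hτ.le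
          have e2 : τ * Real.logb 2 ((restrict i true r).size : ℝ)
              ≤ τ * Real.logb 2 (r.size : ℝ) := mul_le_mul_of_nonneg_left hlogr hτ.le
          have e3 : τ * ((Real.logb 2 (l.size : ℝ) + Real.logb 2 (r.size : ℝ)) / 2 + 1)
              ≤ τ * Real.logb 2 ((l.size : ℝ) + (r.size : ℝ)) :=
            mul_le_mul_of_nonneg_left hlogsum hτ.le
          linarith

end DTreePrune


/-- **Pruning lemma (realizable setting).** If `f` is computed by a decision tree `T` of size
`s ≥ 2` and `τ > 0`, then there is a pruning `T*` of `T` with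
`Pr[f(x) ≠ T*(x)] ≤ τ · log₂ s` that is everywhere `τ`-influential with respect to `f`. -/
theorem stmt0 {n : ℕ} (s : ℕ) (hs : 2 ≤ s) (τ : ℝ) (hτ : 0 < τ)
    (f : (Fin n → Bool) → Bool) (T : DTree Bool n)
    (hsize : T.size = s) (hTf : ∀ x, T.eval x = f x) :
    ∃ Tstar : DTree Bool n, DTree.IsPruning Tstar T ∧
      probNe f Tstar.eval ≤ τ * Real.logb 2 s ∧
      EwInfl τ f Tstar := by
  obtain ⟨Ts, hp, he, hi⟩ := DTreePrune.prune_rec τ hτ T.size T le_rfl f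
  have h0 : probNe f T.eval = 0 := DTreePrune.probNe_eq_zero hTf
  rw [h0, zero_add, hsize] at he
  exact ⟨Ts, hp, he, hi⟩
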